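/- The polynomial -X^5 - 2X^4 + 5X^3 + 2X^2 - 4X + 1 splits into linear factors over the cyclotomic field Q(ζ_11), and all of its complex roots are real. -/

import Mathlib

open Polynomial

noncomputable def quinticPoly : Polynomial ℚ :=
  -X ^ 5 - 2 * X ^ 4 + 5 * X ^ 3 + 2 * X ^ 2 - 4 * X + 1

lemma phi_aux {K : Type*} [Field K] (z : K) (h11 : z ^ 11 = 1) (h1 : z ≠ 1) :
    z^10+z^9+z^8+z^7+z^6+z^5+z^4+z^3+z^2+z+1 = 0 := by
  have h : (z - 1) * (z^10+z^9+z^8+z^7+z^6+z^5+z^4+z^3+z^2+z+1) = 0 := by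
    linear_combination h11
  rcases mul_eq_zero.mp h with h | h
  · exact absurd (sub_eq_zero.mp h) h1
  · exact h

lemma key {K : Type*} [Field K] (z x : K)
    (hΦ : z^10+z^9+z^8+z^7+z^6+z^5+z^4+z^3+z^2+z+1 = 0) :
    -(((1+z+z^10)*x-1)*((1+z^2+z^9)*x-1)*((1+z^3+z^8)*x-1)*((1+z^4+z^7)*x-1)*((1+z^5+z^6)*x-1))
      = -x^5-2*x^4+5*x^3+2*x^2-4*x+1 := by
  linear_combination ((-1)*x + 8*x^2 + (-15)*x^3 + 7*x^4 + (-4)*z*x^2 + 9*z*x^3 + (-3)*z*x^4 + (-1)*z*x^5 + 1*z^3*x^2 + (-3)*z^3*x^3 + 3*z^3*x^4 + (-1)*z^3*x^5 + 1*z^5*x^2 + (-3)*z^5*x^3 + 3*z^5*x^4 + (-1)*z^5*x^5 + (-1)*z^6*x^3 + 2*z^6*x^4 + (-1)*z^6*x^5 + 1*z^7*x^2 + (-3)*z^7*x^3 + 3*z^7*x^4 + (-1)*z^7*x^5 + (-1)*z^8*x^3 + 2*z^8*x^4 + (-1)*z^8*x^5 + 1*z^9*x^2 + (-4)*z^9*x^3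 + 5*z^9*x^4 + (-2)*z^9*x^5 + (-1)*z^10*x^3 + 3*z^10*x^4 + (-2)*z^10*x^5 + 2*z^11*x^3 + (-7)*z^11*x^4 + 4*z^11*x^5 + (-1)*z^12*x^3 + 6*z^12*x^4 + (-4)*z^12*x^5 + (-1)*z^13*x^3 + 3*z^13*x^4 + (-2)*z^13*x^5 + (-1)*z^14*x^3 + 1*z^14*x^4 + (-1)*z^15*x^3 + 3*z^15*x^4 + (-3)*z^15*x^5 + (-1)*z^17*x^3 + 3*z^17*x^4 + (-1)*z^17*x^5 + (-1)*z^18*x^5 + 1*z^19*x^4 + (-1)*z^19*x^5 + (-1)*z^20*x^4 + 1*z^20*x^5 + 1*z^21*x^4 + (-1)*z^21*x^5 + 1*z^22*x^4 + (-2)*z^22*x^5 + 1*z^24*x^4 + (-1)*z^24*x^5 + (-1)*z^27*x^5 + 1*z^28*x^5 + (-1)*z^30*x^5) * hΦ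

lemma case_aux (c z : ℂ) (hc : c.im = 0) (h : c * z - 1 = 0) : z.im = 0 := by
  have h1 : z * c = 1 := by linear_combination h
  have hz : z = c⁻¹ := eq_inv_of_mul_eq_one_left h1
  rw [hz, Complex.inv_im, hc]
  simp

lemma im_aux (w : ℂ) (hw : ‖w‖ = 1) : (1 + w + w⁻¹).im = 0 := by
  rw [Complex.inv_eq_conj hw]
  simp

theorem quintic_splits_real :
    Polynomial.Splits (quinticPoly.map (algebraMap ℚ (CyclotomicField 11 ℚ))) ∧
    ∀ z : ℂ, Polynomial.aeval z quinticPoly = 0 → z.im = 0 := by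
  constructor
  · set K := CyclotomicField 11 ℚ
    haveI : IsCyclotomicExtension {11} ℚ K := CyclotomicField.isCyclotomicExtension 11 ℚ
    have hζ : IsPrimitiveRoot (IsCyclotomicExtension.zeta 11 ℚ K) 11 :=
      IsCyclotomicExtension.zeta_spec 11 ℚ K
    set ζ := IsCyclotomicExtension.zeta 11 ℚ K
    have hΦ : ζ^10+ζ^9+ζ^8+ζ^7+ζ^6+ζ^5+ζ^4+ζ^3+ζ^2+ζ+1 = 0 :=
      phi_aux ζ hζ.pow_eq_one (hζ.ne_one (by norm_num))
    have hfac : quinticPoly.map (algebraMap ℚ K) =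
        C (-1) * ((C (1+ζ+ζ^10) * X + C (-1)) * (C (1+ζ^2+ζ^9) * X + C (-1)) *
          (C (1+ζ^3+ζ^8) * X + C (-1)) * (C (1+ζ^4+ζ^7) * X + C (-1)) *
          (C (1+ζ^5+ζ^6) * X + C (-1))) := by
      apply Polynomial.funext
      intro x
      simp only [quinticPoly, Polynomial.eval_map, eval₂_add, eval₂_sub, eval₂_neg, eval₂_mul,
        eval₂_pow, eval₂_X, eval₂_ofNat, eval₂_one, eval_mul, eval_add, eval_C, eval_X,
        eval_pow, eval_one]
      have := key ζ x hΦ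
      push_cast
      linear_combination -this
    rw [hfac]
    apply Splits.mul (Splits.C _)
    apply Splits.mul ?_ (Splits.of_natDegree_le_one (natDegree_linear_le))
    apply Splits.mul ?_ (Splits.of_natDegree_le_one (natDegree_linear_le))
    apply Splits.mul ?_ (Splits.of_natDegree_le_one (natDegree_linear_le))
    exact Splits.mul (Splits.of_natDegree_le_one (natDegree_linear_le))
      (Splits.of_natDegree_le_one (natDegree_linear_le))
  · intro z hz
    have hζ : IsPrimitiveRoot (Complex.exp (2 * Real.pi * Complex.I / 11)) 11 :=
      Complex.isPrimitiveRoot_exp 11 (by norm_num)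
    set ζ : ℂ := Complex.exp (2 * Real.pi * Complex.I / 11)
    have h11 : ζ ^ 11 = 1 := hζ.pow_eq_one
    have hΦ : ζ^10+ζ^9+ζ^8+ζ^7+ζ^6+ζ^5+ζ^4+ζ^3+ζ^2+ζ+1 = 0 :=
      phi_aux ζ h11 (hζ.ne_one (by norm_num))
    have habs : ‖ζ‖ = 1 := by
      have h1 : ‖ζ‖ ^ 11 = 1 := by
        rw [← norm_pow, h11, norm_one]
      have h2 := norm_nonneg ζ
      rcases lt_trichotomy ‖ζ‖ 1 with h | h | h
      · have := pow_lt_one₀ h2 h (by norm_num : (11:ℕ) ≠ 0)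
        rw [h1] at this; exact absurd this (lt_irrefl 1)
      · exact h
      · have := one_lt_pow₀ h (by norm_num : (11:ℕ) ≠ 0)
        rw [h1] at this; exact absurd this (lt_irrefl 1)
    have habsk : ∀ k : ℕ, ‖ζ ^ k‖ = 1 := by
      intro k; rw [norm_pow, habs, one_pow]
    have hinv : ∀ k : ℕ, k ≤ 11 → ζ ^ (11 - k) = (ζ ^ k)⁻¹ := by
      intro k hk
      apply eq_inv_of_mul_eq_one_left
      rw [← pow_add]
      rw [show 11 - k + k = 11 from by omega, h11]
    have hquintic : aeval z quinticPoly = -z^5-2*z^4+5*z^3+2*z^2-4*z+1 := by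
      simp only [quinticPoly, map_add, map_sub, map_neg, map_mul, map_pow, aeval_X,
        map_ofNat, map_one]
    rw [hquintic] at hz
    have hkey := key ζ z hΦ
    have hP : ((1+ζ+ζ^10)*z-1)*((1+ζ^2+ζ^9)*z-1)*((1+ζ^3+ζ^8)*z-1)*((1+ζ^4+ζ^7)*z-1)*((1+ζ^5+ζ^6)*z-1) = 0 := by
      linear_combination -hkey - hz
    have him : ∀ k : ℕ, 1 ≤ k → k ≤ 5 → (1 + ζ^k + ζ^(11-k)).im = 0 := by
      intro k h1 h5
      rw [hinv k (by omega)]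
      exact im_aux _ (habsk k)
    simp only [mul_eq_zero] at hP
    rcases hP with ((((h | h) | h) | h) | h)
    · exact case_aux _ _ (by have := him 1 (by norm_num) (by norm_num); norm_num at this ⊢; linear_combination this) h
    · exact case_aux _ _ (by have := him 2 (by norm_num) (by norm_num); norm_num at this ⊢; linear_combination this) h
    · exact case_aux _ _ (by have := him 3 (by norm_num) (by norm_num); norm_num at this ⊢; linear_combination this) h
    · exact case_aux _ _ (by have := him 4 (by norm_num) (by norm_num); norm_num at this ⊢; linear_combination this) h
    · exact case_aux _ _ (by have := him 5 (by norm_num) (by norm_num); norm_num at this ⊢; linear_combination this) h
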